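/- The bilinear form φ on the twisted Schrödinger-Virasoro algebra defined on basis elements by φ(L_n, L_m) = ((n³−n)/12)·δ_{m,−n} and zero on all other pairs is a Leibniz 2-cocycle that is not a Leibniz 2-coboundary. -/

import Mathlib

abbrev B : Type := ℤ ⊕ ℤ ⊕ ℤ
abbrev V : Type := B →₀ ℂ

noncomputable def Lg (n : ℤ) : V := Finsupp.single (Sum.inl n) 1
noncomputable def Yg (n : ℤ) : V := Finsupp.single (Sum.inr (Sum.inl n)) 1
noncomputable def Mg (n : ℤ) : V := Finsupp.single (Sum.inr (Sum.inr n)) 1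

/-- Bracket on basis elements of the twisted Schrödinger–Virasoro algebra. -/
noncomputable def brB : B → B → V
  | Sum.inl n, Sum.inl m => ((m : ℂ) - n) • Lg (n + m)
  | Sum.inl n, Sum.inr (Sum.inl m) => ((m : ℂ) - n / 2) • Yg (n + m)
  | Sum.inl n, Sum.inr (Sum.inr p) => (p : ℂ) • Mg (n + p)
  | Sum.inr (Sum.inl m), Sum.inl n => -(((m : ℂ) - n / 2) • Yg (n + m))
  | Sum.inr (Sum.inr p), Sum.inl n => -((p : ℂ) • Mg (n + p))
  | Sum.inr (Sum.inl m), Sum.inr (Sum.inl m') => ((m' : ℂ) - m) • Mg (m + m')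
  | _, _ => 0

/-- The bilinear extension of the bracket to the whole space. -/
noncomputable def bk : V →ₗ[ℂ] V →ₗ[ℂ] V :=
  Finsupp.lsum ℂ fun a => LinearMap.toSpanSingleton ℂ (V →ₗ[ℂ] V)
    (Finsupp.lsum ℂ fun b => LinearMap.toSpanSingleton ℂ V (brB a b))

/-- `φ` is a Leibniz 2-cocycle on the twisted Schrödinger–Virasoro algebra. -/
def IsLeibnizCocycle (φ : V →ₗ[ℂ] V →ₗ[ℂ] ℂ) : Prop :=
  ∀ x y z : V, φ x (bk y z) = φ (bk x y) z - φ (bk x z) y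

/-- The Virasoro Leibniz cocycle on basis elements. -/
noncomputable def virB : B → B → ℂ
  | Sum.inl n, Sum.inl m => if m = -n then ((n : ℂ) ^ 3 - n) / 12 else 0
  | _, _ => 0

/-- The bilinear extension of the Virasoro cocycle. -/
noncomputable def vir : V →ₗ[ℂ] V →ₗ[ℂ] ℂ :=
  Finsupp.lsum ℂ fun a => LinearMap.toSpanSingleton ℂ (V →ₗ[ℂ] ℂ)
    (Finsupp.lsum ℂ fun b => LinearMap.toSpanSingleton ℂ ℂ (virB a b))


lemma bk_ss (a b : B) (c d : ℂ) :
    bk (Finsupp.single a c) (Finsupp.single b d) = (c * d) • brB a b := by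
  simp [bk, Finsupp.lsum_single, LinearMap.toSpanSingleton_apply, smul_smul, mul_comm]

lemma vir_ss (a b : B) (c d : ℂ) :
    vir (Finsupp.single a c) (Finsupp.single b d) = c * d * virB a b := by
  simp [vir, Finsupp.lsum_single, LinearMap.toSpanSingleton_apply, smul_eq_mul]
  ring

/-- The Virasoro cocycle is a Leibniz 2-cocycle which is not a Leibniz 2-coboundary. -/
theorem stmt17 :
    IsLeibnizCocycle vir ∧ ¬ ∃ f : V →ₗ[ℂ] ℂ, ∀ x y : V, vir x y = f (bk x y) := by
  constructor
  · intro x y z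
    induction x using Finsupp.induction_linear with
    | zero => simp
    | add f g hf hg => simp only [map_add, LinearMap.add_apply, hf, hg]; ring
    | single a c =>
      induction y using Finsupp.induction_linear with
      | zero => simp
      | add f g hf hg => simp only [map_add, LinearMap.add_apply, hf, hg]; ring
      | single a' c' =>
        induction z using Finsupp.induction_linear with
        | zero => simp
        | add f g hf hg => simp only [map_add, LinearMap.add_apply, hf, hg]; ring
        | single a'' c'' =>
          rcases a with n | m | p <;> rcases a' with n' | m' | p' <;>
            rcases a'' with n'' | m'' | p'' <;>
            simp only [bk_ss, brB, Lg, Yg, Mg, virB, Finsupp.smul_single, smul_eq_mul,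
              mul_one, smul_neg, neg_neg, map_neg, map_smul, smul_zero, map_zero,
              LinearMap.zero_apply, LinearMap.neg_apply, LinearMap.smul_apply,
              vir_ss, mul_zero, zero_mul, sub_zero, zero_sub, neg_zero, sub_self] <;>
            try ring
          split_ifs with h1 h2 h3 h2 h3 h3 h3
          case pos =>
            obtain rfl : n'' = -n - n' := by omega
            push_cast
            ring
          all_goals first | (exfalso; omega) | ring
  · rintro ⟨f, hf⟩
    have h1 := hf (Lg 1) (Lg (-1))
    have h2 := hf (Lg 2) (Lg (-2))
    simp only [Lg, bk_ss, brB, virB, vir_ss, map_smul, smul_eq_mul, mul_one, one_mul] at h1 h2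
    norm_num at h1 h2
    have : (1 : ℂ) / 2 = 0 := by linear_combination h2 - 4 * h1
    norm_num at this
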